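/- In a single-memory HMM, let g(x) = 1(b^T P(M | X_{1:T} = x) ≥ 0) for b ∈ ℝ^{|𝕄|}. Assume stationarity and the relaxed single-memory non-degeneracy condition with recoverable states H*. Let R = {x ∈ X^T : P(X_{1:T} = x) > 0 and there exists i ∈ [T] with supp(P(H_i | X_{−i} = x_{−i})) ⊆ H*}. Then there exist a prompt π ∈ [0,1]^{|𝕄||H|} — defining the modified sequence X̂ of length T+1 with fake token z̃ at position 1 (P(X̂_1 = z̃ | M = m, H_1 = h) = π_{(m,h)}, P(X̂_1 = z | M = m, H_1 = h) = (1 − π_{(m,h)}) P(X_1 = z | M = m, H_1 = h), unchanged emissions for i > 1) and x̂ = (z̃, x) — and attention-head parameters: a key matrix Θ^{(K)} ∈ ℝ^{(|H|+1)×|X|}, a query q ∈ ℝ^{|H|+1}, position embeddings β_1, …, β_{T+1} ∈ ℝ^{|H|+1}, value parameters Θ^{(V)} ∈ ℝ^{|𝕄||H|×|X|} and u ∈ ℝ^{|𝕄||H|}, and token embeddings e(z) ∈ ℝ^{|𝕄||H|} with e(z)_{(m,h)} = W_{z,(m,h)}, such that for all x ∈ R: g(x) = 1( (1/|I|) Σ_{i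 ∈ I} u^T ((Θ^{(V)} Ĝ_i(x)) ⊙ ê_i(x)) ≥ 0 ), where Ĝ_i(x) = W v_i(x) with (v_i(x))_{(m,h)} = P(M = m, H_i = h | X̂_{−i} = x̂_{−i}) (and Ĝ_i(x) = 0 when P(X̂_{−i} = x̂_{−i}) = 0), ê_1(x) = π and ê_i(x) = e(x_{i−1}) for i > 1, and I = argmax_{i ∈ [T+1]} { q^T (Θ^{(K)} Ĝ_i(x) + β_i) }. -/

import Mathlib

open scoped Classical
open Matrix

noncomputable section

/-- Forward pass for a Markov chain with transition matrix `A`. -/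
def fwdVec {H : Type*} [Fintype H] (A : Matrix H H ℝ) :
    (H → ℝ) → List (H → ℝ) → (H → ℝ)
  | μ, [] => μ
  | μ, v :: vs => fwdVec A (A.mulVec fun h => μ h * v h) vs

/-- Single-memory HMM, conditioned on `M = m`:
`sJointAt A μ W m x i g = P(H_i = g, X_{−i} = x_{−i} | M = m)`
(hidden chain `H_1, …, H_T`, `P(H_1) = A μ`, emissions `W z m g`). -/
def sJointAt {𝕄 H X : Type*} {T : ℕ} [Fintype H] [DecidableEq H]
    (A : Matrix H H ℝ) (μ : H → ℝ) (W : X → 𝕄 → H → ℝ) (m : 𝕄)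
    (x : Fin T → X) (i : Fin T) (g : H) : ℝ :=
  ∑ h, fwdVec A (A.mulVec μ)
    (List.ofFn fun k : Fin T =>
      if k = i then (fun g' => if g' = g then 1 else 0)
      else fun g' => W (x k) m g') h

/-- `sZ … x i = P(X_{−i} = x_{−i})`. -/
def sZ {𝕄 H X : Type*} {T : ℕ} [Fintype 𝕄] [Fintype H] [DecidableEq H]
    (pM : 𝕄 → ℝ) (A : Matrix H H ℝ) (μ : H → ℝ) (W : X → 𝕄 → H → ℝ)
    (x : Fin T → X) (i : Fin T) : ℝ :=
  ∑ m, pM m * ∑ g, sJointAt A μ W m x i g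

/-- `sPostH … x i g = P(H_i = g | X_{−i} = x_{−i})`. -/
def sPostH {𝕄 H X : Type*} {T : ℕ} [Fintype 𝕄] [Fintype H] [DecidableEq H]
    (pM : 𝕄 → ℝ) (A : Matrix H H ℝ) (μ : H → ℝ) (W : X → 𝕄 → H → ℝ)
    (x : Fin T → X) (i : Fin T) (g : H) : ℝ :=
  (∑ m, pM m * sJointAt A μ W m x i g) / sZ pM A μ W x i

/-- `sSeqPm … m x = P(X_{1:T} = x | M = m)`. -/
def sSeqPm {𝕄 H X : Type*} {T : ℕ} [Fintype H]
    (A : Matrix H H ℝ) (μ : H → ℝ) (W : X → 𝕄 → H → ℝ) (m : 𝕄)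
    (x : Fin T → X) : ℝ :=
  ∑ h, fwdVec A (A.mulVec μ) (List.ofFn fun k : Fin T => fun g' => W (x k) m g') h

/-- `sSeqP … x = P(X_{1:T} = x)`. -/
def sSeqP {𝕄 H X : Type*} {T : ℕ} [Fintype 𝕄] [Fintype H]
    (pM : 𝕄 → ℝ) (A : Matrix H H ℝ) (μ : H → ℝ) (W : X → 𝕄 → H → ℝ)
    (x : Fin T → X) : ℝ :=
  ∑ m, pM m * sSeqPm A μ W m x

/-- Conditioned on `M = m`, the emission-likelihood vector at position `k`
of the modified sequence `x̂ = (z̃, x_1, …, x_T)` induced by the prompt `π`: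
`P(X̂_1 = z̃ | M = m, H_1 = g) = π (m, g)` and positions `k ≥ 1` emit
`x_k` with the original emissions. -/
def sHatEm {𝕄 H X : Type*} {T : ℕ} (W : X → 𝕄 → H → ℝ) (π : 𝕄 × H → ℝ)
    (m : 𝕄) (x : Fin T → X) (k : Fin (T + 1)) : H → ℝ :=
  if hk : (k : ℕ) = 0 then fun g => π (m, g)
  else fun g => W (x ⟨(k : ℕ) - 1, by have := k.isLt; omega⟩) m g

/-- `sHatJointAt … π m x i g = P(H_i = g, X̂_{−i} = x̂_{−i} | M = m)` for the
modified sequence of length `T+1`. -/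
def sHatJointAt {𝕄 H X : Type*} {T : ℕ} [Fintype H] [DecidableEq H]
    (A : Matrix H H ℝ) (μ : H → ℝ) (W : X → 𝕄 → H → ℝ) (π : 𝕄 × H → ℝ)
    (m : 𝕄) (x : Fin T → X) (i : Fin (T + 1)) (g : H) : ℝ :=
  ∑ h, fwdVec A (A.mulVec μ)
    (List.ofFn fun k : Fin (T + 1) =>
      if k = i then (fun g' => if g' = g then 1 else 0)
      else sHatEm W π m x k) h

/-- `sHatZ … π x i = P(X̂_{−i} = x̂_{−i})`. -/
def sHatZ {𝕄 H X : Type*} {T : ℕ} [Fintype 𝕄] [Fintype H] [DecidableEq H]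
    (pM : 𝕄 → ℝ) (A : Matrix H H ℝ) (μ : H → ℝ) (W : X → 𝕄 → H → ℝ)
    (π : 𝕄 × H → ℝ) (x : Fin T → X) (i : Fin (T + 1)) : ℝ :=
  ∑ m, pM m * ∑ g, sHatJointAt A μ W π m x i g

/-- `sHatG … π x i = Ĝ_i(x) = W v_i(x)` where
`(v_i(x))_{(m,h)} = P(M = m, H_i = h | X̂_{−i} = x̂_{−i})`, and `Ĝ_i(x) = 0`
when `P(X̂_{−i} = x̂_{−i}) = 0`. -/
def sHatG {𝕄 H X : Type*} {T : ℕ} [Fintype 𝕄] [Fintype H] [Fintype X]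
    [DecidableEq H]
    (pM : 𝕄 → ℝ) (A : Matrix H H ℝ) (μ : H → ℝ) (W : X → 𝕄 → H → ℝ)
    (π : 𝕄 × H → ℝ) (x : Fin T → X) (i : Fin (T + 1)) (z : X) : ℝ :=
  if 0 < sHatZ pM A μ W π x i then
    ∑ p : 𝕄 × H, W z p.1 p.2 *
      (pM p.1 * sHatJointAt A μ W π p.1 x i p.2 / sHatZ pM A μ W π x i)
  else 0

/-- The value-embedding sequence: `ê_1(x) = π` and `ê_i(x) = e(x_{i−1})` for
`i > 1`, with token embeddings `e(z)_{(m,h)} = W_{z,(m,h)}`. -/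
def sEvec {𝕄 H X : Type*} {T : ℕ} (W : X → 𝕄 → H → ℝ) (π : 𝕄 × H → ℝ)
    (x : Fin T → X) (i : Fin (T + 1)) : 𝕄 × H → ℝ :=
  if hk : (i : ℕ) = 0 then π
  else fun p => W (x ⟨(i : ℕ) - 1, by have := i.isLt; omega⟩) p.1 p.2

section AuxFwd
variable {H : Type*} [Fintype H]

lemma fwdVec_cons (A : Matrix H H ℝ) (μ v : H → ℝ) (L : List (H → ℝ)) :
    fwdVec A μ (v :: L) = fwdVec A (A.mulVec fun h => μ h * v h) L := rfl

lemma fwdVec_lincomb {ι : Type*} [Fintype ι] (A : Matrix H H ℝ) (L : List (H → ℝ)) :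
    ∀ (c : ι → ℝ) (f : ι → H → ℝ),
      fwdVec A (fun h => ∑ j, c j * f j h) L
        = fun h => ∑ j, c j * fwdVec A (f j) L h := by
  induction L with
  | nil => intro c f; rfl
  | cons v L ih =>
      intro c f
      rw [fwdVec_cons]
      have h1 : (A.mulVec fun h => (∑ j, c j * f j h) * v h)
          = fun h => ∑ j, c j * (A.mulVec fun h' => f j h' * v h') h := by
        funext h
        simp only [Matrix.mulVec, dotProduct, Finset.mul_sum, Finset.sum_mul]
        rw [Finset.sum_comm]
        apply Finset.sum_congr rfl
        intro g _
        apply Finset.sum_congr rfl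
        intro j _
        ring
      rw [h1, ih]
      rfl

lemma fwdVec_smul (A : Matrix H H ℝ) (L : List (H → ℝ)) :
    ∀ (c : ℝ) (μ : H → ℝ),
      fwdVec A (fun h => c * μ h) L = fun h => c * fwdVec A μ L h := by
  induction L with
  | nil => intro c μ; rfl
  | cons v L ih =>
      intro c μ
      rw [fwdVec_cons]
      have h1 : (A.mulVec fun h => (c * μ h) * v h)
          = fun h => c * (A.mulVec fun h' => μ h' * v h') h := by
        funext h
        simp only [Matrix.mulVec, dotProduct, Finset.mul_sum]
        apply Finset.sum_congr rfl
        intro g _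
        ring
      rw [h1, ih]
      rfl

lemma fwdVec_zero (A : Matrix H H ℝ) (L : List (H → ℝ)) :
    fwdVec A (fun _ => (0:ℝ)) L = fun _ => 0 := by
  have := fwdVec_smul A L 0 (fun _ => 0)
  simpa using this

lemma fwdVec_nonneg (A : Matrix H H ℝ) (hA : ∀ g g', 0 ≤ A g' g) :
    ∀ (L : List (H → ℝ)), (∀ v ∈ L, ∀ h, 0 ≤ v h) →
      ∀ (μ : H → ℝ), (∀ h, 0 ≤ μ h) → ∀ h, 0 ≤ fwdVec A μ L h := by
  intro L
  induction L with
  | nil => intro _ μ hμ h; exact hμ h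
  | cons v L ih =>
      intro hL μ hμ h
      rw [fwdVec_cons]
      apply ih (fun w hw => hL w (List.mem_cons_of_mem _ hw))
      intro h'
      apply Finset.sum_nonneg
      intro g _
      exact mul_nonneg (hA g h') (mul_nonneg (hμ g) (hL v List.mem_cons_self g))
      
lemma fwdVec_set [DecidableEq H] (A : Matrix H H ℝ) :
    ∀ (L : List (H → ℝ)) (j : ℕ), j < L.length → ∀ (μ : H → ℝ) (c : H → ℝ),
      ∑ g, c g * (∑ h, fwdVec A μ (L.set j fun g' => if g' = g then 1 else 0) h)
        = ∑ h, fwdVec A μ (L.set j c) h := by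
  intro L
  induction L with
  | nil => intro j hj; simp at hj
  | cons v L ih =>
      intro j hj μ c
      cases j with
      | zero =>
          simp only [List.set_cons_zero, fwdVec_cons]
          have swap : ∑ g, c g * (∑ h, fwdVec A
              (A.mulVec fun h => μ h * if h = g then 1 else 0) L h)
              = ∑ h, ∑ g, c g * fwdVec A
                (A.mulVec fun h' => μ h' * if h' = g then 1 else 0) L h := by
            rw [Finset.sum_comm]
            apply Finset.sum_congr rfl
            intro g _
            rw [Finset.mul_sum]
          rw [swap]
          have hlc := fwdVec_lincomb A L c
            (fun g => A.mulVec fun h' => μ h' * if h' = g then 1 else 0)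
          have h2 : (fun h => ∑ g, c g *
                (A.mulVec fun h' => μ h' * if h' = g then 1 else 0) h)
              = A.mulVec (fun h => μ h * c h) := by
            funext h
            simp only [Matrix.mulVec, dotProduct, Finset.mul_sum, mul_ite, mul_one, mul_zero]
            rw [Finset.sum_comm]
            apply Finset.sum_congr rfl
            intro g _
            simp [Finset.mul_sum, mul_ite, mul_zero]
            ring
          apply Finset.sum_congr rfl
          intro h _
          rw [← congrFun (hlc) h, congrArg (fun ν => fwdVec A ν L h) h2]
      | succ j =>
          simp only [List.set_cons_succ, fwdVec_cons]
          exact ih j (by simpa using hj) _ c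

end AuxFwd
section AuxList
variable {α : Type*}

lemma ofFn_ite_eq_set {T : ℕ} (w : Fin T → α) (i : Fin T) (a : α) :
    (List.ofFn fun k => if k = i then a else w k) = (List.ofFn w).set i a := by
  apply List.ext_getElem
  · simp
  · intro n h1 h2
    simp only [List.getElem_ofFn, List.getElem_set, Fin.ext_iff]
    rcases eq_or_ne ((i : ℕ)) n with hc | hc
    · simp [hc]
    · simp [hc, Ne.symm hc, List.getElem_ofFn]

lemma ofFn_set_self {T : ℕ} (w : Fin T → α) (i : Fin T) :
    (List.ofFn w).set i (w i) = List.ofFn w := by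
  apply List.ext_getElem
  · simp
  · intro n h1 h2
    simp only [List.getElem_set]
    split_ifs with h1
    · simp only [List.getElem_ofFn]
      exact congrArg w (Fin.val_injective h1)
    · rfl

end AuxList

section AuxJoint
variable {𝕄 H X : Type*} {T : ℕ} [Fintype H] [DecidableEq H]

lemma sum_sJointAt_mul (A : Matrix H H ℝ) (μ : H → ℝ) (W : X → 𝕄 → H → ℝ)
    (m : 𝕄) (x : Fin T → X) (i : Fin T) (c : H → ℝ) :
    ∑ g, c g * sJointAt A μ W m x i g
      = ∑ h, fwdVec A (A.mulVec μ)
          ((List.ofFn fun k : Fin T => fun g' => W (x k) m g').set i c) h := by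
  unfold sJointAt
  have : ∀ g : H, (List.ofFn fun k : Fin T =>
      if k = i then (fun g' => if g' = g then (1:ℝ) else 0)
      else fun g' => W (x k) m g')
      = (List.ofFn fun k : Fin T => fun g' => W (x k) m g').set i
          (fun g' => if g' = g then 1 else 0) := by
    intro g
    exact ofFn_ite_eq_set _ i _
  rw [show (∑ g, c g * ∑ h, fwdVec A (A.mulVec μ)
      (List.ofFn fun k : Fin T =>
        if k = i then (fun g' => if g' = g then (1:ℝ) else 0)
        else fun g' => W (x k) m g') h)
    = ∑ g, c g * ∑ h, fwdVec A (A.mulVec μ)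
      ((List.ofFn fun k : Fin T => fun g' => W (x k) m g').set i
        (fun g' => if g' = g then 1 else 0)) h from
    Finset.sum_congr rfl fun g _ => by rw [this g]]
  exact fwdVec_set A _ i (by simp [i.isLt]) _ c

lemma sum_sJointAt_emit (A : Matrix H H ℝ) (μ : H → ℝ) (W : X → 𝕄 → H → ℝ)
    (m : 𝕄) (x : Fin T → X) (i : Fin T) :
    ∑ g, W (x i) m g * sJointAt A μ W m x i g = sSeqPm A μ W m x := by
  rw [sum_sJointAt_mul A μ W m x i (fun g => W (x i) m g)]
  unfold sSeqPm
  rw [ofFn_set_self (fun k : Fin T => fun g' => W (x k) m g') i]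

lemma sJointAt_nonneg (A : Matrix H H ℝ) (hA : ∀ g g', 0 ≤ A g' g)
    (μ : H → ℝ) (hμ : ∀ g, 0 ≤ μ g) (W : X → 𝕄 → H → ℝ) (hW : ∀ z m g, 0 ≤ W z m g)
    (m : 𝕄) (x : Fin T → X) (i : Fin T) (g : H) :
    0 ≤ sJointAt A μ W m x i g := by
  apply Finset.sum_nonneg
  intro h _
  apply fwdVec_nonneg A hA _ _ _ _ h
  · intro v hv
    rw [List.mem_ofFn] at hv
    obtain ⟨k, rfl⟩ := hv
    intro h'
    rcases eq_or_ne k i with hk | hk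
    · simp only [if_pos hk]
      by_cases hg : h' = g <;> simp [hg]
    · simp only [if_neg hk]
      exact hW _ _ _
  · intro h'
    apply Finset.sum_nonneg
    intro g' _
    exact mul_nonneg (hA g' h') (hμ g')

lemma sSeqPm_nonneg (A : Matrix H H ℝ) (hA : ∀ g g', 0 ≤ A g' g)
    (μ : H → ℝ) (hμ : ∀ g, 0 ≤ μ g) (W : X → 𝕄 → H → ℝ) (hW : ∀ z m g, 0 ≤ W z m g)
    (m : 𝕄) (x : Fin T → X) :
    0 ≤ sSeqPm A μ W m x := by
  apply Finset.sum_nonneg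
  intro h _
  apply fwdVec_nonneg A hA _ _ _ _ h
  · intro v hv
    rw [List.mem_ofFn] at hv
    obtain ⟨k, rfl⟩ := hv
    intro h'
    exact hW _ _ _
  · intro h'
    apply Finset.sum_nonneg
    intro g' _
    exact mul_nonneg (hA g' h') (hμ g')

end AuxJoint
section AuxHat
variable {𝕄 H X : Type*} {T : ℕ} [Fintype H] [DecidableEq H]

lemma sHatEm_succ (W : X → 𝕄 → H → ℝ) (π : 𝕄 × H → ℝ) (m : 𝕄) (x : Fin T → X)
    (k : Fin T) : sHatEm W π m x k.succ = fun g => W (x k) m g := by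
  unfold sHatEm
  rw [dif_neg (by simp [Fin.val_succ])]
  simp only [Fin.val_succ, Nat.add_sub_cancel, Fin.eta]

lemma sHatEm_zero (W : X → 𝕄 → H → ℝ) (π : 𝕄 × H → ℝ) (m : 𝕄) (x : Fin T → X) :
    sHatEm W π m x 0 = fun g => π (m, g) := by
  simp [sHatEm]

lemma sHatJointAt_succ (A : Matrix H H ℝ) (μ : H → ℝ) (hstat : A.mulVec μ = μ)
    (W : X → 𝕄 → H → ℝ) (π : 𝕄 × H → ℝ) (m : 𝕄) (hπ : ∀ g, π (m, g) = 1)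
    (x : Fin T → X) (i : Fin T) (g : H) :
    sHatJointAt A μ W π m x i.succ g = sJointAt A μ W m x i g := by
  unfold sHatJointAt sJointAt
  rw [List.ofFn_succ]
  have h0 : (if (0 : Fin (T+1)) = i.succ then (fun g' => if g' = g then (1:ℝ) else 0)
      else sHatEm W π m x 0) = fun _ => 1 := by
    rw [if_neg (Fin.succ_ne_zero i).symm, sHatEm_zero]
    funext g'
    exact hπ g'
  rw [h0]
  apply Finset.sum_congr rfl
  intro h _
  rw [fwdVec_cons]
  have hmul : (fun h => A.mulVec μ h * (fun _ : H => (1:ℝ)) h) = A.mulVec μ := by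
    funext h'
    simp
  rw [hmul, congrArg A.mulVec hstat]
  have htail : (List.ofFn fun k : Fin T =>
      if k.succ = i.succ then (fun g' => if g' = g then (1:ℝ) else 0)
      else sHatEm W π m x k.succ)
      = List.ofFn fun k : Fin T =>
          if k = i then (fun g' => if g' = g then (1:ℝ) else 0)
          else fun g' => W (x k) m g' := by
    apply congrArg List.ofFn
    funext k
    rcases eq_or_ne k i with hk | hk
    · rw [if_pos (by rw [hk]), if_pos hk]
    · rw [if_neg (by simpa [Fin.succ_inj] using hk), if_neg hk, sHatEm_succ]
  rw [htail]

lemma sHatJointAt_succ_zero (A : Matrix H H ℝ) (μ : H → ℝ)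
    (W : X → 𝕄 → H → ℝ) (π : 𝕄 × H → ℝ) (m : 𝕄) (hπ : ∀ g, π (m, g) = 0)
    (x : Fin T → X) (i : Fin T) (g : H) :
    sHatJointAt A μ W π m x i.succ g = 0 := by
  unfold sHatJointAt
  rw [List.ofFn_succ]
  have h0 : (if (0 : Fin (T+1)) = i.succ then (fun g' => if g' = g then (1:ℝ) else 0)
      else sHatEm W π m x 0) = fun _ => 0 := by
    rw [if_neg (Fin.succ_ne_zero i).symm, sHatEm_zero]
    funext g'
    exact hπ g'
  rw [h0]
  apply Finset.sum_eq_zero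
  intro h _
  rw [fwdVec_cons]
  have hz : (A.mulVec fun h' => A.mulVec μ h' * (fun _ : H => (0:ℝ)) h') = fun _ : H => (0:ℝ) := by
    funext h'
    simp [Matrix.mulVec, dotProduct]
  rw [hz, fwdVec_zero]

lemma sHatJointAt_nonneg (A : Matrix H H ℝ) (hA : ∀ g g', 0 ≤ A g' g)
    (μ : H → ℝ) (hμ : ∀ g, 0 ≤ μ g) (W : X → 𝕄 → H → ℝ) (hW : ∀ z m g, 0 ≤ W z m g)
    (π : 𝕄 × H → ℝ) (hπ : ∀ p, 0 ≤ π p)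
    (m : 𝕄) (x : Fin T → X) (i : Fin (T+1)) (g : H) :
    0 ≤ sHatJointAt A μ W π m x i g := by
  apply Finset.sum_nonneg
  intro h _
  apply fwdVec_nonneg A hA _ _ _ _ h
  · intro v hv
    rw [List.mem_ofFn] at hv
    obtain ⟨k, rfl⟩ := hv
    intro h'
    rcases eq_or_ne k i with hk | hk
    · simp only [if_pos hk]
      by_cases hg : h' = g <;> simp [hg]
    · simp only [if_neg hk]
      unfold sHatEm
      split
      · exact hπ _
      · exact hW _ _ _
  · intro h'
    apply Finset.sum_nonneg
    intro g' _
    exact mul_nonneg (hA g' h') (hμ g')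

end AuxHat

section AuxEv
variable {𝕄 H X : Type*} {T : ℕ}

lemma sEvec_succ (W : X → 𝕄 → H → ℝ) (π : 𝕄 × H → ℝ) (x : Fin T → X) (j : Fin T) :
    sEvec W π x j.succ = fun p => W (x j) p.1 p.2 := by
  unfold sEvec
  rw [dif_neg (by simp [Fin.val_succ])]
  simp only [Fin.val_succ, Nat.add_sub_cancel, Fin.eta]

lemma sEvec_zero (W : X → 𝕄 → H → ℝ) (π : 𝕄 × H → ℝ) (x : Fin T → X) :
    sEvec W π x 0 = π := by
  simp [sEvec]

end AuxEv
section AuxLA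
variable {𝕄 H X : Type*} [Fintype 𝕄] [Fintype H] [Fintype X]

lemma exists_phi_MM (W : X → 𝕄 → H → ℝ) (b : 𝕄 → ℝ) (Hstar : Finset H)
    (hli : LinearIndependent ℝ
      (fun p : {m : 𝕄 // b m ≠ 0} × {h : H // h ∈ Hstar} =>
        fun z : X => W z p.1.1 p.2.1))
    (hspan : Submodule.span ℝ
        {f : X → ℝ | ∃ m : 𝕄, ∃ h : H,
          b m ≠ 0 ∧ h ∈ Hstar ∧ f = fun z => W z m h}
      ⊓ Submodule.span ℝ
        {f : X → ℝ | ∃ m : 𝕄, ∃ h : H,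
          b m ≠ 0 ∧ h ∉ Hstar ∧ f = fun z => W z m h}
      = ⊥) :
    ∃ (φ : (X → ℝ) →ₗ[ℝ] ℝ) (MM : (X → ℝ) →ₗ[ℝ] (𝕄 × H → ℝ)),
      (∀ m g, b m ≠ 0 → g ∈ Hstar → φ (fun z => W z m g) = 1) ∧
      (∀ m g, b m ≠ 0 → g ∉ Hstar → φ (fun z => W z m g) = 0) ∧
      (∀ m g, b m ≠ 0 → g ∈ Hstar → ∀ z,
        (∑ p : 𝕄 × H, W z p.1 p.2 * MM (fun z' => W z' m g) p) = b m * W z m g) ∧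
      (∀ m g, b m ≠ 0 → g ∉ Hstar → ∀ z,
        (∑ p : 𝕄 × H, W z p.1 p.2 * MM (fun z' => W z' m g) p) = 0) := by
  classical
  set fam : {m : 𝕄 // b m ≠ 0} × {h : H // h ∈ Hstar} → (X → ℝ) :=
    fun p => fun z => W z p.1.1 p.2.1 with hfam
  have hrangefam : Set.range fam
      = {f : X → ℝ | ∃ m : 𝕄, ∃ h : H, b m ≠ 0 ∧ h ∈ Hstar ∧ f = fun z => W z m h} := by
    ext f
    constructor
    · rintro ⟨⟨⟨m, hm⟩, ⟨g, hg⟩⟩, rfl⟩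
      exact ⟨m, g, hm, hg, rfl⟩
    · rintro ⟨m, g, hm, hg, rfl⟩
      exact ⟨⟨⟨m, hm⟩, ⟨g, hg⟩⟩, rfl⟩
  set V1 : Submodule ℝ (X → ℝ) := Submodule.span ℝ (Set.range fam) with hV1
  set V2 : Submodule ℝ (X → ℝ) := Submodule.span ℝ
    {f : X → ℝ | ∃ m : 𝕄, ∃ h : H, b m ≠ 0 ∧ h ∉ Hstar ∧ f = fun z => W z m h} with hV2
  have hV1V2 : V1 ⊓ V2 = ⊥ := by rw [hV1, hrangefam]; exact hspan
  -- basis of V1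
  let B1 : Module.Basis _ ℝ V1 := Module.Basis.span hli
  -- complement U of V1 containing V2
  obtain ⟨U₀, hU₀⟩ := Submodule.exists_isCompl (V1 ⊔ V2)
  have hdisj : Disjoint V1 (V2 ⊔ U₀) := by
    rw [disjoint_iff]
    rw [Submodule.eq_bot_iff]
    intro y hy
    obtain ⟨hy1, hy2⟩ := Submodule.mem_inf.mp hy
    obtain ⟨v, hv, u, hu, rfl⟩ := Submodule.mem_sup.mp hy2
    have hu0 : u = 0 := by
      have h1 : u ∈ (V1 ⊔ V2) ⊓ U₀ := by
        refine Submodule.mem_inf.mpr ⟨?_, hu⟩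
        have : u = (v + u) - v := by ring
        rw [this]
        exact Submodule.sub_mem _ (Submodule.mem_sup_left hy1) (Submodule.mem_sup_right hv)
      have := hU₀.inf_eq_bot
      rw [this] at h1
      simpa using h1
    have hv1 : v + u ∈ V1 ⊓ V2 := by
      refine Submodule.mem_inf.mpr ⟨hy1, ?_⟩
      rw [hu0, add_zero]
      exact hv
    rw [hV1V2] at hv1
    simpa using hv1
  have hcodis : Codisjoint V1 (V2 ⊔ U₀) := by
    rw [codisjoint_iff, ← sup_assoc]
    exact hU₀.codisjoint.eq_top
  have hcompl : IsCompl V1 (V2 ⊔ U₀) := ⟨hdisj, hcodis⟩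
  set P : (X → ℝ) →ₗ[ℝ] V1 := Submodule.linearProjOfIsCompl V1 (V2 ⊔ U₀) hcompl with hP
  -- facts about P on the generators
  have hPmem : ∀ p, fam p ∈ V1 := fun p => Submodule.subset_span (Set.mem_range_self p)
  have hPleft : ∀ m g (hm : b m ≠ 0) (hg : g ∈ Hstar),
      P (fun z => W z m g) = ⟨fun z => W z m g, hPmem ⟨⟨m, hm⟩, ⟨g, hg⟩⟩⟩ := by
    intro m g hm hg
    exact Submodule.linearProjOfIsCompl_apply_left hcompl ⟨fun z => W z m g, hPmem ⟨⟨m, hm⟩, ⟨g, hg⟩⟩⟩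
  have hPright : ∀ m g, b m ≠ 0 → g ∉ Hstar → P (fun z => W z m g) = 0 := by
    intro m g hm hg
    apply Submodule.linearProjOfIsCompl_apply_right hcompl ⟨fun z => W z m g, ?_⟩
    exact Submodule.mem_sup_left (Submodule.subset_span ⟨m, g, hm, hg, rfl⟩)
  -- basis vector identification
  have hB1 : ∀ p, (B1 p : X → ℝ) = fam p := fun p => congrArg Subtype.val (Module.Basis.span_apply hli p)
  have hBeq : ∀ m g (hm : b m ≠ 0) (hg : g ∈ Hstar),
      (⟨fun z => W z m g, hPmem ⟨⟨m, hm⟩, ⟨g, hg⟩⟩⟩ : V1) = B1 ⟨⟨m, hm⟩, ⟨g, hg⟩⟩ := by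
    intro m g hm hg
    apply Subtype.ext
    rw [hB1]
  -- linear maps on V1
  set φ1 : V1 →ₗ[ℝ] ℝ := B1.constr ℝ (fun _ => (1:ℝ)) with hφ1
  set N1 : V1 →ₗ[ℝ] (X → ℝ) := B1.constr ℝ (fun p => b p.1.1 • fam p) with hN1
  set φ : (X → ℝ) →ₗ[ℝ] ℝ := φ1 ∘ₗ P with hφ
  set NN : (X → ℝ) →ₗ[ℝ] (X → ℝ) := N1 ∘ₗ P with hNN
  have hφin : ∀ m g, b m ≠ 0 → g ∈ Hstar → φ (fun z => W z m g) = 1 := by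
    intro m g hm hg
    rw [hφ, LinearMap.comp_apply, hPleft m g hm hg, hBeq m g hm hg, hφ1, Module.Basis.constr_basis]
  have hφout : ∀ m g, b m ≠ 0 → g ∉ Hstar → φ (fun z => W z m g) = 0 := by
    intro m g hm hg
    rw [hφ, LinearMap.comp_apply, hPright m g hm hg, map_zero]
  have hNin : ∀ m g (hm : b m ≠ 0) (hg : g ∈ Hstar),
      NN (fun z => W z m g) = b m • (fun z => W z m g) := by
    intro m g hm hg
    rw [hNN, LinearMap.comp_apply, hPleft m g hm hg, hBeq m g hm hg, hN1, Module.Basis.constr_basis]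
  have hNout : ∀ m g, b m ≠ 0 → g ∉ Hstar → NN (fun z => W z m g) = 0 := by
    intro m g hm hg
    rw [hNN, LinearMap.comp_apply, hPright m g hm hg, map_zero]
  -- W as a linear map
  set Wmap : (𝕄 × H → ℝ) →ₗ[ℝ] (X → ℝ) :=
    (Matrix.of fun z (p : 𝕄 × H) => W z p.1 p.2).mulVecLin with hWmap
  have hWmapply : ∀ (w : 𝕄 × H → ℝ) z, Wmap w z = ∑ p : 𝕄 × H, W z p.1 p.2 * w p := by
    intro w z
    rw [hWmap]
    simp [Matrix.mulVecLin_apply, Matrix.mulVec, dotProduct]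
  have hcolmem : ∀ m g, (fun z => W z m g) ∈ LinearMap.range Wmap := by
    intro m g
    refine ⟨Pi.single (m, g) 1, ?_⟩
    funext z
    rw [hWmapply]
    rw [Finset.sum_eq_single (m, g)]
    · simp
    · intro p _ hp
      simp [Pi.single_apply, hp]
    · simp
  have hrange : ∀ y, NN y ∈ LinearMap.range Wmap := by
    intro y
    have : NN y = N1 (P y) := rfl
    rw [this]
    have hr : LinearMap.range N1 ≤ LinearMap.range Wmap := by
      rw [hN1, Module.Basis.constr_range]
      rw [Submodule.span_le]
      rintro f ⟨p, rfl⟩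
      exact Submodule.smul_mem _ _ (hcolmem p.1.1 p.2.1)
    exact hr ⟨P y, rfl⟩
  -- section of Wmap
  have hsurj : LinearMap.range Wmap.rangeRestrict = ⊤ :=
    LinearMap.range_eq_top.mpr (LinearMap.surjective_rangeRestrict Wmap)
  obtain ⟨S, hS⟩ := Wmap.rangeRestrict.exists_rightInverse_of_surjective hsurj
  set MM : (X → ℝ) →ₗ[ℝ] (𝕄 × H → ℝ) :=
    S ∘ₗ (NN.codRestrict (LinearMap.range Wmap) hrange) with hMM
  have hkey : ∀ y, Wmap (MM y) = NN y := by
    intro y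
    have h1 : Wmap.rangeRestrict (S (NN.codRestrict (LinearMap.range Wmap) hrange y))
        = NN.codRestrict (LinearMap.range Wmap) hrange y := by
      rw [← LinearMap.comp_apply, hS, LinearMap.id_apply]
    have h2 := congrArg Subtype.val h1
    simpa [hMM] using h2
  refine ⟨φ, MM, hφin, hφout, ?_, ?_⟩
  · intro m g hm hg z
    have h1 : (∑ p : 𝕄 × H, W z p.1 p.2 * MM (fun z' => W z' m g) p)
        = Wmap (MM (fun z' => W z' m g)) z := (hWmapply _ z).symm
    rw [h1, hkey, hNin m g hm hg]
    simp
  · intro m g hm hg z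
    have h1 : (∑ p : 𝕄 × H, W z p.1 p.2 * MM (fun z' => W z' m g) p)
        = Wmap (MM (fun z' => W z' m g)) z := (hWmapply _ z).symm
    rw [h1, hkey, hNout m g hm hg]
    simp

end AuxLA
/-!
STATEMENT 18 (Theorem 4 of the paper: single-memory prompt tuning).

Single-memory HMM; downstream labels `g(x) = 𝟙(bᵀ P(M | X_{1:T} = x) ≥ 0)`.
Assume stationarity (ergodic chain, full support, `P(H_0) = A P(H_0)`) and
the relaxed single-memory non-degeneracy condition with recoverable states
`H*`.  Let `R = {x : P(X_{1:T} = x) > 0 and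
∃ i ∈ [T], supp(P(H_i | X_{−i} = x_{−i})) ⊆ H*}`.  Then there exist a prompt
`π ∈ [0,1]^{|𝕄||H|}` and attention-head parameters `Θᴷ, q, β, Θⱽ, u` such
that for all `x ∈ R`:
`g(x) = 𝟙( (1/|I|) ∑_{i ∈ I} uᵀ ((Θⱽ Ĝ_i(x)) ⊙ ê_i(x)) ≥ 0 )`,
`I = argmax_{i ∈ [T+1]} { qᵀ (Θᴷ Ĝ_i(x) + β_i) }`.
-/
theorem stmt18 {𝕄 H X : Type*}
    [Fintype 𝕄] [Fintype H] [Fintype X] [DecidableEq 𝕄] [DecidableEq H]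
    (pM : 𝕄 → ℝ) (μ : H → ℝ) (A : Matrix H H ℝ) (W : X → 𝕄 → H → ℝ)
    (hpM0 : ∀ m, 0 ≤ pM m) (hpM1 : ∑ m, pM m = 1)
    (hμ0 : ∀ g, 0 ≤ μ g) (hμ1 : ∑ g, μ g = 1)
    (hA0 : ∀ g g', 0 ≤ A g' g) (hA1 : ∀ g, ∑ g', A g' g = 1)
    (hW0 : ∀ z m g, 0 ≤ W z m g) (hW1 : ∀ m g, ∑ z, W z m g = 1)
    -- stationarity: ergodic chain, full support, `P(H_0) = A P(H_0)`
    (hErg : ∃ n₀ : ℕ, ∀ n ≥ n₀, ∀ g g' : H, 0 < (A ^ n) g' g)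
    (hfull : ∀ g, 0 < μ g)
    (hstat : A.mulVec μ = μ)
    (b : 𝕄 → ℝ)
    -- relaxed single-memory non-degeneracy with `𝕄* = supp(b)` and `H* = Hstar`
    (Hstar : Finset H)
    (hli : LinearIndependent ℝ
      (fun p : {m : 𝕄 // b m ≠ 0} × {h : H // h ∈ Hstar} =>
        fun z : X => W z p.1.1 p.2.1))
    (hspan : Submodule.span ℝ
        {f : X → ℝ | ∃ m : 𝕄, ∃ h : H,
          b m ≠ 0 ∧ h ∈ Hstar ∧ f = fun z => W z m h}
      ⊓ Submodule.span ℝ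
        {f : X → ℝ | ∃ m : 𝕄, ∃ h : H,
          b m ≠ 0 ∧ h ∉ Hstar ∧ f = fun z => W z m h}
      = ⊥)
    (T : ℕ) :
    ∃ π : 𝕄 × H → ℝ, (∀ p, 0 ≤ π p ∧ π p ≤ 1) ∧
    ∃ (ΘK : Matrix (Option H) X ℝ) (q : Option H → ℝ)
      (β : Fin (T + 1) → Option H → ℝ)
      (ΘV : Matrix (𝕄 × H) X ℝ) (u : 𝕄 × H → ℝ),
      ∀ x : Fin T → X,
        -- `x ∈ R`
        0 < sSeqP pM A μ W x →
        (∃ i : Fin T, ∀ g : H, g ∉ Hstar → sPostH pM A μ W x i g = 0) →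
        (0 ≤ ∑ m, b m * (pM m * sSeqPm A μ W m x / sSeqP pM A μ W x)
          ↔ 0 ≤
            ((Finset.univ.filter fun i : Fin (T + 1) => ∀ i' : Fin (T + 1),
                q ⬝ᵥ (ΘK.mulVec (sHatG pM A μ W π x i') + β i')
                  ≤ q ⬝ᵥ (ΘK.mulVec (sHatG pM A μ W π x i) + β i)).card : ℝ)⁻¹ *
              ∑ i ∈ Finset.univ.filter (fun i : Fin (T + 1) => ∀ i' : Fin (T + 1),
                  q ⬝ᵥ (ΘK.mulVec (sHatG pM A μ W π x i') + β i')
                    ≤ q ⬝ᵥ (ΘK.mulVec (sHatG pM A μ W π x i) + β i)),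
                ∑ p : 𝕄 × H, u p *
                  ((ΘV.mulVec (sHatG pM A μ W π x i)) p * sEvec W π x i p)) := by
  classical
  obtain ⟨φ, MM, hφin, hφout, hMin, hMout⟩ := exists_phi_MM W b Hstar hli hspan
  set π : 𝕄 × H → ℝ := fun p => if b p.1 = 0 then 0 else 1 with hπdef
  have hπ01 : ∀ p, 0 ≤ π p ∧ π p ≤ 1 := by
    intro p
    by_cases h : b p.1 = 0 <;> simp [hπdef, h]
  have hπ0 : ∀ p, 0 ≤ π p := fun p => (hπ01 p).1
  have hπone : ∀ m, b m ≠ 0 → ∀ g, π (m, g) = 1 := by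
    intro m hm g; simp [hπdef, hm]
  have hπzero : ∀ m, b m = 0 → ∀ g, π (m, g) = 0 := by
    intro m hm g; simp [hπdef, hm]
  set K : ℝ := ∑ p : 𝕄 × H, |φ (fun z => W z p.1 p.2)| with hK
  set ΘK : Matrix (Option H) X ℝ :=
    Matrix.of (fun o z => if o = none then φ (Pi.single z 1) else 0) with hΘK
  set q : Option H → ℝ := fun o => if o = none then 1 else 0 with hqdef
  set β : Fin (T+1) → Option H → ℝ :=
    fun i o => if o = none then (if (i : ℕ) = 0 then -(K+1) else 0) else 0 with hβ
  set ΘV : Matrix (𝕄 × H) X ℝ := Matrix.of (fun p z => MM (Pi.single z 1) p) with hΘV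
  refine ⟨π, hπ01, ΘK, q, β, ΘV, fun _ => 1, ?_⟩
  intro x hx hex
  obtain ⟨i₀, hi₀⟩ := hex
  -- generic decomposition of functions on X
  have hdecomp : ∀ G : X → ℝ, G = ∑ z, G z • (Pi.single z 1 : X → ℝ) := by
    intro G
    funext z'
    rw [Finset.sum_apply, Finset.sum_eq_single z']
    · simp
    · intro zz _ hzz
      simp [Pi.single_eq_of_ne (Ne.symm hzz)]
    · simp
  have hφsum : ∀ G : X → ℝ, (∑ z, φ (Pi.single z 1) * G z) = φ G := by
    intro G
    conv_rhs => rw [hdecomp G]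
    rw [map_sum]
    apply Finset.sum_congr rfl
    intro z _
    rw [_root_.map_smul, smul_eq_mul]
    ring
  have hMMsum : ∀ G : X → ℝ, ΘV.mulVec G = MM G := by
    intro G
    funext p
    conv_rhs => rw [hdecomp G]
    rw [map_sum, Finset.sum_apply]
    rw [Matrix.mulVec, dotProduct]
    apply Finset.sum_congr rfl
    intro z _
    rw [_root_.map_smul, Pi.smul_apply, smul_eq_mul, hΘV]
    simp [mul_comm]
  -- basic nonnegativity
  have hJnn : ∀ (i : Fin T) m g, 0 ≤ sJointAt A μ W m x i g :=
    fun i m g => sJointAt_nonneg A hA0 μ hμ0 W hW0 m x i g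
  have hHatnn : ∀ (i : Fin (T+1)) m g, 0 ≤ sHatJointAt A μ W π m x i g :=
    fun i m g => sHatJointAt_nonneg A hA0 μ hμ0 W hW0 π hπ0 m x i g
  have hPmnn : ∀ m, 0 ≤ sSeqPm A μ W m x :=
    fun m => sSeqPm_nonneg A hA0 μ hμ0 W hW0 m x
  have hWle1 : ∀ z m g, W z m g ≤ 1 := by
    intro z m g
    calc W z m g ≤ ∑ z', W z' m g :=
          Finset.single_le_sum (fun z' _ => hW0 z' m g) (Finset.mem_univ z)
      _ = 1 := hW1 m g
  -- Z and weights
  set Z : Fin (T+1) → ℝ := fun i => sHatZ pM A μ W π x i with hZdef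
  set wv : Fin (T+1) → 𝕄 × H → ℝ := fun i p =>
    if 0 < Z i then pM p.1 * sHatJointAt A μ W π p.1 x i p.2 / Z i else 0 with hwvdef
  have hZnn : ∀ i, 0 ≤ Z i := by
    intro i
    apply Finset.sum_nonneg
    intro m _
    exact mul_nonneg (hpM0 m) (Finset.sum_nonneg fun g _ => hHatnn i m g)
  have hZalt : ∀ i, Z i = ∑ p : 𝕄 × H, pM p.1 * sHatJointAt A μ W π p.1 x i p.2 := by
    intro i
    rw [hZdef]
    show sHatZ pM A μ W π x i = _
    unfold sHatZ
    rw [Fintype.sum_prod_type]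
    apply Finset.sum_congr rfl
    intro m _
    rw [Finset.mul_sum]
  have hwvnn : ∀ i p, 0 ≤ wv i p := by
    intro i p
    rw [hwvdef]
    dsimp only
    split
    · exact div_nonneg (mul_nonneg (hpM0 _) (hHatnn _ _ _)) (hZnn i)
    · exact le_refl 0
  have hwvsum : ∀ i, ∑ p : 𝕄 × H, wv i p = if 0 < Z i then 1 else 0 := by
    intro i
    rw [hwvdef]
    by_cases hZi : 0 < Z i
    · rw [if_pos hZi]
      simp only [if_pos hZi]
      rw [← Finset.sum_div, ← hZalt i, div_self (ne_of_gt hZi)]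
    · rw [if_neg hZi]
      simp only [if_neg hZi]
      exact Finset.sum_const_zero
  have hwvle1 : ∀ i p, wv i p ≤ 1 := by
    intro i p
    calc wv i p ≤ ∑ p' : 𝕄 × H, wv i p' :=
          Finset.single_le_sum (fun p' _ => hwvnn i p') (Finset.mem_univ p)
      _ ≤ 1 := by rw [hwvsum i]; split <;> norm_num
  have hwvb : ∀ (j : Fin T) (p : 𝕄 × H), b p.1 = 0 → wv j.succ p = 0 := by
    intro j p hb
    rw [hwvdef]
    dsimp only
    split
    · rw [sHatJointAt_succ_zero A μ W π p.1 (hπzero p.1 hb) x j p.2]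
      simp
    · rfl
  have hHatsucc : ∀ (j : Fin T) (p : 𝕄 × H), b p.1 ≠ 0 →
      sHatJointAt A μ W π p.1 x j.succ p.2 = sJointAt A μ W p.1 x j p.2 :=
    fun j p hb => sHatJointAt_succ A μ hstat W π p.1 (hπone p.1 hb) x j p.2
  -- G decomposition
  have hGdec : ∀ i, sHatG pM A μ W π x i = fun z => ∑ p : 𝕄 × H, W z p.1 p.2 * wv i p := by
    intro i
    funext z
    show sHatG pM A μ W π x i z = _
    unfold sHatG
    by_cases hZi : 0 < Z i
    · rw [if_pos (show 0 < sHatZ pM A μ W π x i from hZi)]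
      apply Finset.sum_congr rfl
      intro p _
      rw [hwvdef]
      simp only [if_pos hZi]
      rfl
    · rw [if_neg (show ¬ 0 < sHatZ pM A μ W π x i from hZi)]
      symm
      apply Finset.sum_eq_zero
      intro p _
      rw [hwvdef]
      simp only [if_neg hZi]
      exact mul_zero _
  have hGcomb : ∀ i, sHatG pM A μ W π x i
      = ∑ p : 𝕄 × H, wv i p • (fun z => W z p.1 p.2) := by
    intro i
    rw [hGdec i]
    funext z
    rw [Finset.sum_apply]
    apply Finset.sum_congr rfl
    intro p _
    rw [Pi.smul_apply, smul_eq_mul, mul_comm]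
  have hφG : ∀ i, φ (sHatG pM A μ W π x i)
      = ∑ p : 𝕄 × H, wv i p * φ (fun z => W z p.1 p.2) := by
    intro i
    rw [hGcomb i, map_sum]
    apply Finset.sum_congr rfl
    intro p _
    rw [_root_.map_smul, smul_eq_mul]
  have hMMG : ∀ i, MM (sHatG pM A μ W π x i)
      = ∑ p : 𝕄 × H, wv i p • MM (fun z => W z p.1 p.2) := by
    intro i
    rw [hGcomb i, map_sum]
    apply Finset.sum_congr rfl
    intro p _
    rw [_root_.map_smul]
  -- score
  have hscore : ∀ i : Fin (T+1),
      q ⬝ᵥ (ΘK.mulVec (sHatG pM A μ W π x i) + β i)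
        = φ (sHatG pM A μ W π x i) + (if (i : ℕ) = 0 then -(K+1) else 0) := by
    intro i
    have h1 : q ⬝ᵥ (ΘK.mulVec (sHatG pM A μ W π x i) + β i)
        = (ΘK.mulVec (sHatG pM A μ W π x i)) none + β i none := by
      rw [dotProduct]
      rw [Finset.sum_eq_single (none : Option H)]
      · simp [hqdef]
      · intro o _ ho
        simp [hqdef, ho]
      · simp
    rw [h1]
    have h2 : (ΘK.mulVec (sHatG pM A μ W π x i)) none = φ (sHatG pM A μ W π x i) := by
      rw [Matrix.mulVec, dotProduct, ← hφsum (sHatG pM A μ W π x i)]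
      apply Finset.sum_congr rfl
      intro z _
      simp [hΘK]
    rw [h2]
    congr 1
  set sc : Fin (T+1) → ℝ := fun i =>
    φ (sHatG pM A μ W π x i) + (if (i : ℕ) = 0 then -(K+1) else 0) with hscdef
  have hscore' : ∀ i : Fin (T+1),
      q ⬝ᵥ (ΘK.mulVec (sHatG pM A μ W π x i) + β i) = sc i := fun i => hscore i
  have hFeq : (Finset.univ.filter fun i : Fin (T + 1) => ∀ i' : Fin (T + 1),
        q ⬝ᵥ (ΘK.mulVec (sHatG pM A μ W π x i') + β i')
          ≤ q ⬝ᵥ (ΘK.mulVec (sHatG pM A μ W π x i) + β i))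
      = Finset.univ.filter (fun i : Fin (T+1) => ∀ i' : Fin (T+1), sc i' ≤ sc i) := by
    apply Finset.filter_congr
    intro i _
    constructor
    · intro hp i'
      rw [← hscore' i', ← hscore' i]
      exact hp i'
    · intro hp i'
      rw [hscore' i', hscore' i]
      exact hp i'
  -- score values at successor positions
  have hscsucc : ∀ j : Fin T,
      sc j.succ = ∑ p : 𝕄 × H, wv j.succ p * (if p.2 ∈ Hstar then 1 else 0) := by
    intro j
    rw [hscdef]
    dsimp only
    rw [if_neg (by simp [Fin.val_succ]), add_zero, hφG]
    apply Finset.sum_congr rfl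
    intro p _
    by_cases hb : b p.1 = 0
    · rw [hwvb j p hb, zero_mul, zero_mul]
    · congr 1
      by_cases hg : p.2 ∈ Hstar
      · rw [if_pos hg]
        exact hφin p.1 p.2 hb hg
      · rw [if_neg hg]
        exact hφout p.1 p.2 hb hg
  have hscsucc_nn : ∀ j : Fin T, 0 ≤ sc j.succ := by
    intro j
    rw [hscsucc j]
    apply Finset.sum_nonneg
    intro p _
    apply mul_nonneg (hwvnn _ _)
    split <;> norm_num
  have hscsucc_le_sum : ∀ j : Fin T, sc j.succ ≤ ∑ p : 𝕄 × H, wv j.succ p := by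
    intro j
    rw [hscsucc j]
    apply Finset.sum_le_sum
    intro p _
    calc wv j.succ p * (if p.2 ∈ Hstar then 1 else 0)
        ≤ wv j.succ p * 1 := by
          apply mul_le_mul_of_nonneg_left _ (hwvnn _ _)
          split <;> norm_num
      _ = wv j.succ p := mul_one _
  have hscsucc_le1 : ∀ j : Fin T, sc j.succ ≤ 1 := by
    intro j
    calc sc j.succ ≤ ∑ p : 𝕄 × H, wv j.succ p := hscsucc_le_sum j
      _ ≤ 1 := by rw [hwvsum]; split <;> norm_num
  -- score at position 0
  have hsc0 : sc 0 ≤ -1 := by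
    rw [hscdef]
    have h00 : ((0 : Fin (T+1)) : ℕ) = 0 := rfl
    dsimp only
    rw [if_pos h00, hφG]
    have hb : ∑ p : 𝕄 × H, wv 0 p * φ (fun z => W z p.1 p.2) ≤ K := by
      rw [hK]
      apply Finset.sum_le_sum
      intro p _
      calc wv 0 p * φ (fun z => W z p.1 p.2)
          ≤ wv 0 p * |φ (fun z => W z p.1 p.2)| :=
            mul_le_mul_of_nonneg_left (le_abs_self _) (hwvnn _ _)
        _ ≤ 1 * |φ (fun z => W z p.1 p.2)| :=
            mul_le_mul_of_nonneg_right (hwvle1 _ _) (abs_nonneg _)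
        _ = |φ (fun z => W z p.1 p.2)| := one_mul _
    linarith
  -- position 0 is never attended
  have h0not : ∀ i : Fin (T+1), (∀ i' : Fin (T+1), sc i' ≤ sc i) → i ≠ 0 := by
    intro i hi h0
    have h1 := hi i₀.succ
    rw [h0] at h1
    have h2 := hscsucc_nn i₀
    linarith
  -- the value at successor positions
  have hsv : ∀ j : Fin T,
      (∑ p : 𝕄 × H, (ΘV.mulVec (sHatG pM A μ W π x j.succ)) p * sEvec W π x j.succ p)
        = ∑ p : 𝕄 × H, wv j.succ p *
            (if p.2 ∈ Hstar then b p.1 * W (x j) p.1 p.2 else 0) := by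
    intro j
    have h1 : ∀ p : 𝕄 × H, (∑ p' : 𝕄 × H, wv j.succ p' • MM (fun z => W z p'.1 p'.2)) p
        = ∑ p' : 𝕄 × H, wv j.succ p' * MM (fun z => W z p'.1 p'.2) p := by
      intro p
      rw [Finset.sum_apply]
      apply Finset.sum_congr rfl
      intro p' _
      rw [Pi.smul_apply, smul_eq_mul]
    simp only [hMMsum, hMMG, sEvec_succ, h1]
    have h2 : ∑ p : 𝕄 × H,
          (∑ p' : 𝕄 × H, wv j.succ p' * MM (fun z => W z p'.1 p'.2) p) * W (x j) p.1 p.2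
        = ∑ p' : 𝕄 × H, wv j.succ p' *
            ∑ p : 𝕄 × H, W (x j) p.1 p.2 * MM (fun z => W z p'.1 p'.2) p := by
      simp only [Finset.sum_mul]
      rw [Finset.sum_comm]
      apply Finset.sum_congr rfl
      intro p' _
      rw [Finset.mul_sum]
      apply Finset.sum_congr rfl
      intro p _
      ring
    rw [h2]
    apply Finset.sum_congr rfl
    intro p' _
    by_cases hb : b p'.1 = 0
    · rw [hwvb j p' hb, zero_mul, zero_mul]
    · congr 1
      by_cases hg : p'.2 ∈ Hstar
      · rw [if_pos hg]
        exact hMin p'.1 p'.2 hb hg (x j)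
      · rw [if_neg hg]
        exact hMout p'.1 p'.2 hb hg (x j)
  -- emission resummation identity
  have hemit : ∀ (j : Fin T) m, ∑ g, W (x j) m g * sJointAt A μ W m x j g
      = sSeqPm A μ W m x := fun j m => sum_sJointAt_emit A μ W m x j
  have hPle : ∀ m, sSeqPm A μ W m x ≤ ∑ g, sJointAt A μ W m x i₀ g := by
    intro m
    rw [← hemit i₀ m]
    apply Finset.sum_le_sum
    intro g _
    exact mul_le_of_le_one_left (hJnn i₀ m g) (hWle1 (x i₀) m g)
  have hsZpos : 0 < sZ pM A μ W x i₀ := by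
    have h1 : sSeqP pM A μ W x ≤ sZ pM A μ W x i₀ := by
      unfold sSeqP sZ
      apply Finset.sum_le_sum
      intro m _
      exact mul_le_mul_of_nonneg_left (hPle m) (hpM0 m)
    linarith
  have hnum0 : ∀ g, g ∉ Hstar → ∀ m, pM m * sJointAt A μ W m x i₀ g = 0 := by
    intro g hg
    have h1 := hi₀ g hg
    unfold sPostH at h1
    rcases div_eq_zero_iff.mp h1 with h2 | h2
    · intro m
      exact (Finset.sum_eq_zero_iff_of_nonneg
        (fun m _ => mul_nonneg (hpM0 m) (hJnn i₀ m g))).mp h2 m (Finset.mem_univ m)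
    · exact absurd h2 (ne_of_gt hsZpos)
  have hZsucc : ∀ j : Fin T, Z j.succ
      = ∑ m, if b m = 0 then 0 else pM m * ∑ g, sJointAt A μ W m x j g := by
    intro j
    rw [hZdef]
    show sHatZ pM A μ W π x j.succ = _
    unfold sHatZ
    apply Finset.sum_congr rfl
    intro m _
    by_cases hb : b m = 0
    · rw [if_pos hb]
      have h3 : ∀ g, sHatJointAt A μ W π m x j.succ g = 0 :=
        fun g => sHatJointAt_succ_zero A μ W π m (hπzero m hb) x j g
      simp [h3]
    · rw [if_neg hb]
      congr 1
      apply Finset.sum_congr rfl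
      intro g _
      exact sHatJointAt_succ A μ hstat W π m (hπone m hb) x j g
  set τ : ℝ := ∑ m, b m * (pM m * sSeqPm A μ W m x) with hτdef
  have hLHS : (0 ≤ ∑ m, b m * (pM m * sSeqPm A μ W m x / sSeqP pM A μ W x)) ↔ 0 ≤ τ := by
    have h1 : ∑ m, b m * (pM m * sSeqPm A μ W m x / sSeqP pM A μ W x)
        = τ / sSeqP pM A μ W x := by
      rw [hτdef, Finset.sum_div]
      apply Finset.sum_congr rfl
      intro m _
      ring
    rw [h1, le_div_iff₀ hx, zero_mul]
  rw [hFeq, hLHS]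
  simp only [one_mul]
  by_cases hA : 0 < Z i₀.succ
  · -- Case A : the good position has positive hat-evidence
    have hoff : ∀ p : 𝕄 × H, p.2 ∉ Hstar → wv i₀.succ p = 0 := by
      intro p hp
      by_cases hb : b p.1 = 0
      · exact hwvb i₀ p hb
      · rw [hwvdef]
        dsimp only
        rw [if_pos hA, hHatsucc i₀ p hb, hnum0 p.2 hp p.1, zero_div]
    have hsci₀ : sc i₀.succ = 1 := by
      rw [hscsucc i₀]
      have h1 : ∑ p : 𝕄 × H, wv i₀.succ p * (if p.2 ∈ Hstar then 1 else 0)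
          = ∑ p : 𝕄 × H, wv i₀.succ p := by
        apply Finset.sum_congr rfl
        intro p _
        by_cases hg : p.2 ∈ Hstar
        · rw [if_pos hg, mul_one]
        · rw [hoff p hg, zero_mul]
      rw [h1, hwvsum, if_pos hA]
    have hmem : ∀ i : Fin (T+1), (∀ i' : Fin (T+1), sc i' ≤ sc i) →
        ∃ j : Fin T, i = j.succ ∧ 0 < Z j.succ ∧
          (∀ p : 𝕄 × H, p.2 ∉ Hstar → wv j.succ p = 0) := by
      intro i hi
      rcases Fin.eq_zero_or_eq_succ i with h0 | ⟨j, rfl⟩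
      · exact absurd h0 (h0not i hi)
      · have h1 : (1:ℝ) ≤ sc j.succ := by
          rw [← hsci₀]; exact hi i₀.succ
        have hsum1 : (1:ℝ) ≤ ∑ p : 𝕄 × H, wv j.succ p :=
          le_trans h1 (hscsucc_le_sum j)
        have hZj : 0 < Z j.succ := by
          by_contra hc
          rw [hwvsum j.succ, if_neg hc] at hsum1
          linarith
        have hseq1 : ∑ p : 𝕄 × H, wv j.succ p = 1 := by rw [hwvsum, if_pos hZj]
        have hsceq : sc j.succ = 1 := le_antisymm (hscsucc_le1 j) h1
        have hdiffsum : ∑ p : 𝕄 × H,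
            (wv j.succ p - wv j.succ p * (if p.2 ∈ Hstar then 1 else 0)) = 0 := by
          rw [Finset.sum_sub_distrib, hseq1, ← hscsucc j, hsceq, sub_self]
        have hnn : ∀ p : 𝕄 × H, p ∈ Finset.univ →
            0 ≤ wv j.succ p - wv j.succ p * (if p.2 ∈ Hstar then 1 else 0) := by
          intro p _
          have h2 : wv j.succ p * (if p.2 ∈ Hstar then 1 else 0) ≤ wv j.succ p * 1 := by
            apply mul_le_mul_of_nonneg_left _ (hwvnn _ _)
            split <;> norm_num
          rw [mul_one] at h2
          linarith
        have hterm := (Finset.sum_eq_zero_iff_of_nonneg hnn).mp hdiffsum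
        refine ⟨j, rfl, hZj, ?_⟩
        intro p hp
        have h2 := hterm p (Finset.mem_univ p)
        rw [if_neg hp, mul_zero, sub_zero] at h2
        exact h2
    have hval : ∀ i ∈ Finset.univ.filter
        (fun i : Fin (T+1) => ∀ i' : Fin (T+1), sc i' ≤ sc i),
        (∑ p : 𝕄 × H, (ΘV.mulVec (sHatG pM A μ W π x i)) p * sEvec W π x i p)
          = τ * (Z i)⁻¹ := by
      intro i hi
      obtain ⟨j, rfl, hZj, hoffj⟩ := hmem i ((Finset.mem_filter.mp hi).2)
      rw [hsv j]
      have h1 : ∑ p : 𝕄 × H, wv j.succ p *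
            (if p.2 ∈ Hstar then b p.1 * W (x j) p.1 p.2 else 0)
          = ∑ p : 𝕄 × H, wv j.succ p * (b p.1 * W (x j) p.1 p.2) := by
        apply Finset.sum_congr rfl
        intro p _
        by_cases hg : p.2 ∈ Hstar
        · rw [if_pos hg]
        · rw [hoffj p hg, zero_mul, zero_mul]
      rw [h1, Fintype.sum_prod_type, hτdef, Finset.sum_mul]
      apply Finset.sum_congr rfl
      intro m _
      by_cases hb : b m = 0
      · simp [hb]
      · have hwvm : ∀ g, wv j.succ (m, g)
            = pM m * sJointAt A μ W m x j g / Z j.succ := by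
          intro g
          rw [hwvdef]
          dsimp only
          rw [if_pos hZj, hHatsucc j (m, g) hb]
        rw [← hemit j m, Finset.mul_sum, Finset.mul_sum, Finset.sum_mul]
        apply Finset.sum_congr rfl
        intro g _
        rw [hwvm g, div_eq_mul_inv]
        ring
    have hsum2 : ∑ i ∈ Finset.univ.filter
          (fun i : Fin (T+1) => ∀ i' : Fin (T+1), sc i' ≤ sc i),
          (∑ p : 𝕄 × H, (ΘV.mulVec (sHatG pM A μ W π x i)) p * sEvec W π x i p)
        = τ * ∑ i ∈ Finset.univ.filter
            (fun i : Fin (T+1) => ∀ i' : Fin (T+1), sc i' ≤ sc i), (Z i)⁻¹ := by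
      rw [Finset.mul_sum]
      exact Finset.sum_congr rfl hval
    have hne : i₀.succ ∈ Finset.univ.filter
        (fun i : Fin (T+1) => ∀ i' : Fin (T+1), sc i' ≤ sc i) := by
      rw [Finset.mem_filter]
      refine ⟨Finset.mem_univ _, ?_⟩
      intro i'
      rcases Fin.eq_zero_or_eq_succ i' with h0 | ⟨j, rfl⟩
      · rw [h0, hsci₀]
        linarith [hsc0]
      · rw [hsci₀]
        exact hscsucc_le1 j
    have hcardpos : 0 < ((Finset.univ.filter
        (fun i : Fin (T+1) => ∀ i' : Fin (T+1), sc i' ≤ sc i)).card : ℝ) := by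
      rw [Nat.cast_pos, Finset.card_pos]
      exact ⟨i₀.succ, hne⟩
    have hCpos : 0 < ∑ i ∈ Finset.univ.filter
        (fun i : Fin (T+1) => ∀ i' : Fin (T+1), sc i' ≤ sc i), (Z i)⁻¹ := by
      apply Finset.sum_pos
      · intro i hi
        obtain ⟨j, rfl, hZj, _⟩ := hmem i ((Finset.mem_filter.mp hi).2)
        exact inv_pos.mpr hZj
      · exact ⟨i₀.succ, hne⟩
    rw [hsum2]
    constructor
    · intro h
      exact mul_nonneg (inv_nonneg.mpr hcardpos.le) (mul_nonneg h hCpos.le)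
    · intro h
      by_contra hneg
      push_neg at hneg
      have h2 : ((Finset.univ.filter
          (fun i : Fin (T+1) => ∀ i' : Fin (T+1), sc i' ≤ sc i)).card : ℝ)⁻¹ *
          (τ * ∑ i ∈ Finset.univ.filter
            (fun i : Fin (T+1) => ∀ i' : Fin (T+1), sc i' ≤ sc i), (Z i)⁻¹) < 0 :=
        mul_neg_of_pos_of_neg (inv_pos.mpr hcardpos)
          (mul_neg_of_neg_of_pos hneg hCpos)
      linarith
  · -- Case B : the good position has zero hat-evidence
    have hZ0 : Z i₀.succ = 0 := le_antisymm (not_lt.mp hA) (hZnn _)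
    have hsum0 : ∑ m, (if b m = 0 then 0
        else pM m * ∑ g, sJointAt A μ W m x i₀ g) = 0 := by
      rw [← hZsucc i₀]
      exact hZ0
    have hnnB : ∀ m ∈ Finset.univ, (0:ℝ) ≤ if b m = 0 then 0
        else pM m * ∑ g, sJointAt A μ W m x i₀ g := by
      intro m _
      split
      · exact le_refl 0
      · exact mul_nonneg (hpM0 m) (Finset.sum_nonneg fun g _ => hJnn i₀ m g)
    have hterm : ∀ m, b m ≠ 0 → pM m * ∑ g, sJointAt A μ W m x i₀ g = 0 := by
      intro m hb
      have h1 := (Finset.sum_eq_zero_iff_of_nonneg hnnB).mp hsum0 m (Finset.mem_univ m)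
      rw [if_neg hb] at h1
      exact h1
    have hPm0 : ∀ m, b m ≠ 0 → ∀ g, pM m * sJointAt A μ W m x i₀ g = 0 := by
      intro m hb g
      have h1 := hterm m hb
      rw [Finset.mul_sum] at h1
      exact (Finset.sum_eq_zero_iff_of_nonneg
        (fun g _ => mul_nonneg (hpM0 m) (hJnn i₀ m g))).mp h1 g (Finset.mem_univ g)
    have hPmSeq : ∀ m, b m ≠ 0 → pM m * sSeqPm A μ W m x = 0 := by
      intro m hb
      rw [← hemit i₀ m, Finset.mul_sum]
      apply Finset.sum_eq_zero
      intro g _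
      calc pM m * (W (x i₀) m g * sJointAt A μ W m x i₀ g)
          = W (x i₀) m g * (pM m * sJointAt A μ W m x i₀ g) := by ring
        _ = 0 := by rw [hPm0 m hb g, mul_zero]
    have hτ0 : τ = 0 := by
      rw [hτdef]
      apply Finset.sum_eq_zero
      intro m _
      by_cases hb : b m = 0
      · rw [hb, zero_mul]
      · rw [hPmSeq m hb, mul_zero]
    have hval0 : ∀ i : Fin (T+1), (∀ i' : Fin (T+1), sc i' ≤ sc i) →
        (∑ p : 𝕄 × H, (ΘV.mulVec (sHatG pM A μ W π x i)) p * sEvec W π x i p) = 0 := by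
      intro i hi
      rcases Fin.eq_zero_or_eq_succ i with h0 | ⟨j, rfl⟩
      · exact absurd h0 (h0not i hi)
      · rw [hsv j]
        apply Finset.sum_eq_zero
        intro p _
        by_cases hb : b p.1 = 0
        · rw [hwvb j p hb, zero_mul]
        · by_cases hg : p.2 ∈ Hstar
          · rw [if_pos hg, hwvdef]
            dsimp only
            by_cases hZj : 0 < Z j.succ
            · rw [if_pos hZj, hHatsucc j p hb]
              have h1 : pM p.1 * (W (x j) p.1 p.2 * sJointAt A μ W p.1 x j p.2) = 0 := by
                have h2 := hPmSeq p.1 hb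
                rw [← hemit j p.1, Finset.mul_sum] at h2
                exact (Finset.sum_eq_zero_iff_of_nonneg
                  (fun g _ => mul_nonneg (hpM0 p.1)
                    (mul_nonneg (hW0 _ _ _) (hJnn j p.1 g)))).mp h2 p.2 (Finset.mem_univ p.2)
              calc pM p.1 * sJointAt A μ W p.1 x j p.2 / Z j.succ * (b p.1 * W (x j) p.1 p.2)
                  = (b p.1 / Z j.succ) *
                      (pM p.1 * (W (x j) p.1 p.2 * sJointAt A μ W p.1 x j p.2)) := by ring
                _ = 0 := by rw [h1, mul_zero]
            · rw [if_neg hZj, zero_mul]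
          · rw [if_neg hg, mul_zero]
    have hsumz : ∑ i ∈ Finset.univ.filter
        (fun i : Fin (T+1) => ∀ i' : Fin (T+1), sc i' ≤ sc i),
        (∑ p : 𝕄 × H, (ΘV.mulVec (sHatG pM A μ W π x i)) p * sEvec W π x i p) = 0 := by
      apply Finset.sum_eq_zero
      intro i hi
      exact hval0 i ((Finset.mem_filter.mp hi).2)
    rw [hsumz, hτ0, mul_zero]

end
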